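/- Under the time reparametrization t = τ − (1/2)sin 2(τ − π), the Hamiltonian H₂(I,φ,τ) = (1 − cos 2(τ − π))·H̃₂(I,φ, t(τ)) generates the same flow trajectories as H̃₂ and satisfies ℋ(H₂) = ℋ(H̃₂); moreover H₂ is C¹ in τ as a 2π-periodic function even when H̃₂ is discontinuous at τ = 0 and τ = π. -/

import Mathlib

open MeasureTheory Real intervalIntegral

noncomputable section

/-- The Hamiltonian vector field `(−∂H/∂q, ∂H/∂p)` with coordinates `x = (p,q)`. -/
def hamVF (H : ℝ × ℝ → ℝ → ℝ) (x : ℝ × ℝ) (t : ℝ) : ℝ × ℝ :=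
  (-(fderiv ℝ (fun y => H y t) x (0, 1)), fderiv ℝ (fun y => H y t) x (1, 0))

/-- The time reparametrization `t(τ) = τ − (1/2) sin 2(τ − π)`. -/
def trep (τ : ℝ) : ℝ := τ - (1 / 2) * Real.sin (2 * (τ - π))

/-- The "good" set of times, away from the switching times. -/
def Sgood : Set ℝ := Set.Ioo 0 π ∪ Set.Ioo π (2 * π)

lemma isOpen_Sgood : IsOpen Sgood := isOpen_Ioo.union isOpen_Ioo

lemma hasDerivAt_trep (τ : ℝ) :
    HasDerivAt trep (1 - Real.cos (2 * (τ - π))) τ := by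
  have h1 : HasDerivAt (fun τ : ℝ => 2 * (τ - π)) 2 τ := by
    simpa using (((hasDerivAt_id τ).sub_const π).const_mul 2)
  have h2 : HasDerivAt (fun τ : ℝ => Real.sin (2 * (τ - π)))
      (Real.cos (2 * (τ - π)) * 2) τ :=
    h1.sin
  have h3 := (hasDerivAt_id τ).sub (h2.const_mul (1/2))
  convert h3 using 1
  all_goals first | rfl | ring

lemma continuous_trep : Continuous trep := by
  unfold trep; continuity

lemma abs_sin_lt_self {h : ℝ} (hh : 0 < h) : |Real.sin h| < h := by
  have := Real.abs_sin_lt_abs (x := h) (ne_of_gt hh)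
  rwa [abs_of_pos hh] at this

lemma trep_strictMono : StrictMono trep := by
  intro a b hab
  have hkey : |Real.sin (2 * (b - π)) - Real.sin (2 * (a - π))| < 2 * (b - a) := by
    rw [Real.sin_sub_sin]
    have h1 : |Real.sin ((2 * (b - π) - 2 * (a - π)) / 2)| < b - a := by
      have : (2 * (b - π) - 2 * (a - π)) / 2 = b - a := by ring
      rw [this]; exact abs_sin_lt_self (by linarith)
    have h2 : |Real.cos ((2 * (b - π) + 2 * (a - π)) / 2)| ≤ 1 := Real.abs_cos_le_one _
    calc |2 * Real.sin ((2 * (b - π) - 2 * (a - π)) / 2) *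
            Real.cos ((2 * (b - π) + 2 * (a - π)) / 2)|
        = 2 * (|Real.sin ((2 * (b - π) - 2 * (a - π)) / 2)| *
            |Real.cos ((2 * (b - π) + 2 * (a - π)) / 2)|) := by
          rw [abs_mul, abs_mul, abs_two, mul_assoc]
      _ ≤ 2 * (|Real.sin ((2 * (b - π) - 2 * (a - π)) / 2)| * 1) := by
          exact mul_le_mul_of_nonneg_left
            (mul_le_mul_of_nonneg_left h2 (abs_nonneg _)) (by norm_num)
      _ < 2 * (b - a) := by rw [mul_one]; linarith
  have := abs_lt.1 hkey
  unfold trep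
  nlinarith [this.1, this.2]

lemma trep_int_pi (k : ℤ) : trep (k * π) = k * π := by
  unfold trep
  have h : 2 * ((k : ℝ) * π - π) = (2 * k - 2 : ℤ) * π := by push_cast; ring
  rw [h, Real.sin_int_mul_pi]
  ring

lemma trep_zero : trep 0 = 0 := by simpa using trep_int_pi 0

lemma trep_pi : trep π = π := by simpa using trep_int_pi 1

lemma trep_two_pi : trep (2 * π) = 2 * π := by
  have := trep_int_pi 2; push_cast at this; exact this

lemma trep_add_int (τ : ℝ) (k : ℤ) : trep (τ + k * (2 * π)) = trep τ + k * (2 * π) := by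
  unfold trep
  have h : 2 * (τ + (k : ℝ) * (2 * π) - π) = 2 * (τ - π) + (2 * k : ℤ) * (2 * π) := by
    push_cast; ring
  rw [h, Real.sin_add_int_mul_two_pi]
  ring

lemma trep_mem_Sgood {r : ℝ} (hr : r ∈ Sgood) : trep r ∈ Sgood := by
  rcases hr with h | h
  · left
    constructor
    · have := trep_strictMono h.1; rwa [trep_zero] at this
    · have := trep_strictMono h.2; rwa [trep_pi] at this
  · right
    constructor
    · have := trep_strictMono h.1; rwa [trep_pi] at this
    · have := trep_strictMono h.2; rwa [trep_two_pi] at this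

lemma good_or_bad (τ : ℝ) :
    (∃ k : ℤ, τ = k * π) ∨ ∃ k : ℤ, τ - k * (2 * π) ∈ Sgood := by
  have h2π : 0 < 2 * π := by positivity
  have h0 : 0 ≤ τ - ⌊τ / (2 * π)⌋ * (2 * π) := Int.sub_floor_div_mul_nonneg τ h2π
  have h1 : τ - ⌊τ / (2 * π)⌋ * (2 * π) < 2 * π := Int.sub_floor_div_mul_lt τ h2π
  set k := ⌊τ / (2 * π)⌋ with hk
  rcases eq_or_lt_of_le h0 with h | h
  · exact Or.inl ⟨2 * k, by push_cast; linarith⟩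
  rcases lt_trichotomy (τ - k * (2 * π)) π with h' | h' | h'
  · exact Or.inr ⟨k, Or.inl ⟨h, h'⟩⟩
  · exact Or.inl ⟨2 * k + 1, by push_cast; linarith⟩
  · exact Or.inr ⟨k, Or.inr ⟨h', h1⟩⟩

lemma periodic_deriv_shift {f : ℝ → ℝ} (hf : Function.Periodic f (2 * π)) (k : ℤ) (t : ℝ) :
    deriv f t = deriv f (t - k * (2 * π)) := by
  have h1 : (fun x => f (x - k * (2 * π))) = f := by
    funext s; exact hf.sub_int_mul_eq k
  conv_lhs => rw [← h1]
  exact deriv_comp_sub_const f ((k : ℝ) * (2 * π)) t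

lemma periodic_hasDerivAt_shift {f : ℝ → ℝ} (hf : Function.Periodic f (2 * π)) {d t : ℝ}
    (k : ℤ) (h : HasDerivAt f d (t - k * (2 * π))) : HasDerivAt f d t := by
  have hg : HasDerivAt (fun s : ℝ => s - k * (2 * π)) 1 t := by
    simpa using (hasDerivAt_id t).sub_const ((k : ℝ) * (2 * π))
  have h2 := h.comp t hg
  have h1 : (fun x => f (x - k * (2 * π))) = f := by
    funext s; exact hf.sub_int_mul_eq k
  rw [show f ∘ (fun s : ℝ => s - k * (2 * π)) = f from h1] at h2
  simpa using h2

lemma Ht_good {f : ℝ → ℝ} (hf : Function.Periodic f (2 * π))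
    (h1 : ContDiffOn ℝ 1 f (Set.Ioo 0 π)) (h2 : ContDiffOn ℝ 1 f (Set.Ioo π (2 * π)))
    {t : ℝ} {k : ℤ} (ht : t - k * (2 * π) ∈ Sgood) :
    HasDerivAt f (deriv f t) t ∧ ContinuousAt (deriv f) t ∧
      deriv f t = derivWithin f Sgood (t - k * (2 * π)) := by
  set r := t - k * (2 * π) with hr
  have hdiff_r : DifferentiableAt ℝ f r := by
    rcases ht with h | h
    · exact ((h1.differentiableOn one_ne_zero) r h).differentiableAt (isOpen_Ioo.mem_nhds h)
    · exact ((h2.differentiableOn one_ne_zero) r h).differentiableAt (isOpen_Ioo.mem_nhds h)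
  have hcont_r : ContinuousAt (deriv f) r := by
    rcases ht with h | h
    · exact ((h1.continuousOn_deriv_of_isOpen isOpen_Ioo le_rfl) r h).continuousAt
        (isOpen_Ioo.mem_nhds h)
    · exact ((h2.continuousOn_deriv_of_isOpen isOpen_Ioo le_rfl) r h).continuousAt
        (isOpen_Ioo.mem_nhds h)
  have hshift := periodic_deriv_shift hf k t
  refine ⟨?_, ?_, ?_⟩
  · rw [hshift]
    exact periodic_hasDerivAt_shift hf k hdiff_r.hasDerivAt
  · have heq : deriv f = fun s => deriv f (s - k * (2 * π)) := by
      funext s; exact periodic_deriv_shift hf k s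
    rw [heq]
    exact ContinuousAt.comp (f := fun s : ℝ => s - (k : ℝ) * (2 * π)) hcont_r
      ((continuous_id.sub continuous_const).continuousAt)
  · rw [hshift, derivWithin_of_isOpen isOpen_Sgood ht]

lemma one_sub_cos_le (z : ℝ) : 1 - Real.cos (2 * z) ≤ 2 * z ^ 2 := by
  have h1 : Real.cos (2 * z) = 1 - 2 * Real.sin z ^ 2 := by
    have := Real.sin_sq_add_cos_sq z
    rw [Real.cos_two_mul']; nlinarith
  rw [h1]
  have := Real.sin_sq_le_sq (x := z)
  nlinarith

lemma fderiv_const_mul'' {E : Type*} [NormedAddCommGroup E] [NormedSpace ℝ E]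
    (f : E → ℝ) (a : ℝ) (y : E) :
    fderiv ℝ (fun z => a * f z) y = a • fderiv ℝ f y := by
  rcases eq_or_ne a 0 with rfl | ha
  · simp
  by_cases hfd : DifferentiableAt ℝ f y
  · exact fderiv_const_mul hfd a
  · rw [fderiv_zero_of_not_differentiableAt hfd, smul_zero,
      fderiv_zero_of_not_differentiableAt]
    intro h
    apply hfd
    have := h.const_mul a⁻¹
    simpa [inv_mul_cancel_left₀ ha] using this

set_option maxHeartbeats 1000000 in
/-- Under the time reparametrization
`t = τ − (1/2) sin 2(τ − π)`, the Hamiltonian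
`H₂(x, τ) = (1 − cos 2(τ − π)) · H̃₂(x, t(τ))` generates the same flow
trajectories as `H̃₂` and has the same helicity; moreover `H₂` is `C¹` in `τ`
(as a `2π`-periodic function) even though `H̃₂` may be discontinuous in time at
`τ = 0` and `τ = π`. -/
theorem smoothing_reparametrization
    (D : Set (ℝ × ℝ)) (hDcomp : IsCompact D)
    (Ht H₂ : ℝ × ℝ → ℝ → ℝ)
    -- `H̃₂` is `2π`-periodic in time:
    (hper : ∀ x t, Ht x (t + 2 * π) = Ht x t)
    -- `H̃₂` is smooth away from the switching times `t = 0` and `t = π`: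
    (hsm : ∀ x, ContDiffOn ℝ 1 (Ht x) (Set.Ioo 0 π) ∧
      ContDiffOn ℝ 1 (Ht x) (Set.Ioo π (2 * π)))
    -- with bounded values and bounded time-derivative on the smooth pieces:
    (hbd : ∃ M : ℝ, ∀ x ∈ D, (∀ t, |Ht x t| ≤ M) ∧
      ∀ t ∈ Set.Ioo (0:ℝ) π ∪ Set.Ioo π (2 * π),
        |derivWithin (Ht x) (Set.Ioo (0:ℝ) π ∪ Set.Ioo π (2 * π)) t| ≤ M)
    -- `H₂` is the reparametrized Hamiltonian
    -- `H₂(x,τ) = (1 − cos 2(τ − π)) · H̃₂(x, t(τ))`: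
    (hdef : ∀ x τ, H₂ x τ = (1 - Real.cos (2 * (τ - π))) * Ht x (trep τ)) :
    -- `H₂` is `C¹` in `τ`:
    (∀ x ∈ D, ContDiff ℝ 1 (H₂ x)) ∧
    -- the helicity is unchanged: `ℋ(H₂) = ℋ(H̃₂)`:
    ((∫ τ in (0:ℝ)..(2 * π), ∫ x in D, H₂ x τ) =
      ∫ t in (0:ℝ)..(2 * π), ∫ x in D, Ht x t) ∧
    -- `H₂` generates the same flow trajectories: if `g` solves Hamilton's
    -- equations for `H̃₂`, then `τ ↦ g (t(τ)) x` solves them for `H₂`: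
    (∀ g : ℝ → ℝ × ℝ → ℝ × ℝ, ∀ x : ℝ × ℝ,
      (∀ t ∈ Set.Ioo (0:ℝ) π ∪ Set.Ioo π (2 * π),
        HasDerivAt (fun s => g s x) (hamVF Ht (g t x) t) t) →
      ∀ τ, trep τ ∈ Set.Ioo (0:ℝ) π ∪ Set.Ioo π (2 * π) →
        HasDerivAt (fun σ => g (trep σ) x) (hamVF H₂ (g (trep τ) x) τ) τ) := by
  obtain ⟨M, hM⟩ := hbd
  have hπ : 0 < π := Real.pi_pos
  have hbadval : ∀ k : ℤ, Real.cos (2 * ((k : ℝ) * π - π)) = 1 ∧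
      Real.sin (2 * ((k : ℝ) * π - π)) = 0 := by
    intro k
    have h1 : 2 * ((k : ℝ) * π - π) = ((k - 1 : ℤ) : ℝ) * (2 * π) := by push_cast; ring
    have h2 : ((k - 1 : ℤ) : ℝ) * (2 * π) = ((2 * (k - 1) : ℤ) : ℝ) * π := by push_cast; ring
    rw [h1]
    exact ⟨Real.cos_int_mul_two_pi _, by rw [h2]; exact Real.sin_int_mul_pi _⟩
  refine ⟨?_, ?_, ?_⟩
  · -- C¹ part
    intro x hx
    obtain ⟨hMv, hMd⟩ := hM x hx
    have hM0 : 0 ≤ M := le_trans (abs_nonneg _) (hMv 0)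
    have hP : Function.Periodic (Ht x) (2 * π) := fun t => hper x t
    obtain ⟨hsm1, hsm2⟩ := hsm x
    set D₂ : ℝ → ℝ := fun τ => 2 * Real.sin (2 * (τ - π)) * Ht x (trep τ) +
      (1 - Real.cos (2 * (τ - π)))^2 * deriv (Ht x) (trep τ) with hD₂
    have hH2fun : H₂ x = fun τ => (1 - Real.cos (2 * (τ - π))) * Ht x (trep τ) :=
      funext fun τ => hdef x τ
    have hgood : ∀ τ : ℝ, ∀ k : ℤ, τ - k * (2 * π) ∈ Sgood →
        HasDerivAt (Ht x) (deriv (Ht x) (trep τ)) (trep τ) ∧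
          ContinuousAt (deriv (Ht x)) (trep τ) ∧ |deriv (Ht x) (trep τ)| ≤ M := by
      intro τ k hk
      have htrep : trep τ - k * (2 * π) ∈ Sgood := by
        have h1 : trep τ = trep (τ - k * (2 * π)) + k * (2 * π) := by
          conv_lhs => rw [show τ = (τ - (k:ℝ) * (2 * π)) + (k:ℝ) * (2 * π) by ring]
          exact trep_add_int _ k
        rw [h1]
        simpa using trep_mem_Sgood hk
      obtain ⟨hd, hc, he⟩ := Ht_good hP hsm1 hsm2 htrep
      exact ⟨hd, hc, by rw [he]; exact hMd _ htrep⟩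
    have hD20 : ∀ k : ℤ, D₂ ((k : ℝ) * π) = 0 := by
      intro k
      simp only [hD₂, (hbadval k).1, (hbadval k).2]
      ring
    have key1 : ∀ τ : ℝ, HasDerivAt (H₂ x) (D₂ τ) τ := by
      intro τ
      rcases good_or_bad τ with ⟨k, rfl⟩ | ⟨k, hk⟩
      · -- bad point τ = kπ
        have hval : H₂ x ((k : ℝ) * π) = 0 := by
          rw [hdef, (hbadval k).1]; ring
        rw [hD20 k, hasDerivAt_iff_isLittleO]
        have hbound : ∀ σ : ℝ,
            ‖H₂ x σ - H₂ x ((k:ℝ)*π) - (σ - (k:ℝ)*π) • (0:ℝ)‖ ≤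
              (2 * M) * ‖(σ - (k:ℝ)*π)^2‖ := by
          intro σ
          have hz : H₂ x σ - H₂ x ((k:ℝ)*π) - (σ - (k:ℝ)*π) • (0:ℝ) = H₂ x σ := by
            rw [hval]; simp
          rw [hz]
          have hcos : Real.cos (2 * (σ - π)) = Real.cos (2 * (σ - (k:ℝ)*π)) := by
            have h1 : 2 * (σ - π) = 2 * (σ - (k:ℝ)*π) + ((k - 1 : ℤ) : ℝ) * (2 * π) := by
              push_cast; ring
            rw [h1, Real.cos_add_int_mul_two_pi]
          have hcle : 0 ≤ 1 - Real.cos (2 * (σ - π)) := by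
            have := Real.cos_le_one (2 * (σ - π)); linarith
          have h2 : |H₂ x σ| ≤ (1 - Real.cos (2 * (σ - (k:ℝ)*π))) * M := by
            rw [hdef, abs_mul, abs_of_nonneg hcle, hcos]
            exact mul_le_mul_of_nonneg_left (hMv _) (by rw [← hcos]; exact hcle)
          have h3 : 1 - Real.cos (2 * (σ - (k:ℝ)*π)) ≤ 2 * (σ - (k:ℝ)*π)^2 :=
            one_sub_cos_le _
          have h4 : ‖(σ - (k:ℝ)*π)^2‖ = (σ - (k:ℝ)*π)^2 := by
            rw [Real.norm_eq_abs, abs_of_nonneg (sq_nonneg _)]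
          rw [Real.norm_eq_abs, h4]
          nlinarith [sq_nonneg (σ - (k:ℝ)*π), abs_nonneg (H₂ x σ)]
        have hO : (fun σ => H₂ x σ - H₂ x ((k:ℝ)*π) - (σ - (k:ℝ)*π) • (0:ℝ))
            =O[nhds ((k:ℝ)*π)] fun σ => (σ - (k:ℝ)*π)^2 :=
          Asymptotics.IsBigO.of_bound _ (Filter.Eventually.of_forall hbound)
        refine hO.trans_isLittleO ?_
        have ha : (fun σ : ℝ => σ - (k:ℝ)*π) =o[nhds ((k:ℝ)*π)] (fun _ => (1:ℝ)) := by
          rw [Asymptotics.isLittleO_one_iff]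
          have h5 : Filter.Tendsto (fun σ : ℝ => σ - (k:ℝ)*π) (nhds ((k:ℝ)*π))
              (nhds ((k:ℝ)*π - (k:ℝ)*π)) := (continuous_id.sub continuous_const).continuousAt
          simpa using h5
        have hb : (fun σ : ℝ => σ - (k:ℝ)*π) =O[nhds ((k:ℝ)*π)] fun σ => σ - (k:ℝ)*π :=
          Asymptotics.isBigO_refl _ _
        have h6 := ha.mul_isBigO hb
        simpa [pow_two, one_mul] using h6
      · -- good point
        obtain ⟨hd, -, -⟩ := hgood τ k hk
        have hc : HasDerivAt (fun τ : ℝ => 1 - Real.cos (2 * (τ - π)))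
            (2 * Real.sin (2 * (τ - π))) τ := by
          have h1 : HasDerivAt (fun τ : ℝ => 2 * (τ - π)) 2 τ := by
            simpa using (((hasDerivAt_id τ).sub_const π).const_mul 2)
          have h2 := h1.cos
          have h3 := (hasDerivAt_const τ (1:ℝ)).sub h2
          convert h3 using 1
          all_goals first | rfl | ring
        have hcomp := hd.comp τ (hasDerivAt_trep τ)
        have hprod := hc.mul hcomp
        have heq : D₂ τ = 2 * Real.sin (2 * (τ - π)) * ((Ht x) ∘ trep) τ +
            (1 - Real.cos (2 * (τ - π))) *
              (deriv (Ht x) (trep τ) * (1 - Real.cos (2 * (τ - π)))) := by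
          simp only [hD₂, Function.comp_apply]
          ring
        rw [hH2fun, heq]
        exact hprod
    have key2 : Continuous D₂ := by
      rw [continuous_iff_continuousAt]
      intro τ
      rcases good_or_bad τ with ⟨k, rfl⟩ | ⟨k, hk⟩
      · -- bad point: squeeze
        unfold ContinuousAt
        rw [hD20 k]
        have hs1 : Continuous fun τ : ℝ => Real.sin (2 * (τ - π)) :=
          Real.continuous_sin.comp (by fun_prop)
        have hc1 : Continuous fun τ : ℝ => Real.cos (2 * (τ - π)) :=
          Real.continuous_cos.comp (by fun_prop)
        have hgc : Continuous (fun τ : ℝ => 2 * M * |Real.sin (2 * (τ - π))| +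
            M * (1 - Real.cos (2 * (τ - π)))^2) :=
          (continuous_const.mul hs1.abs).add
            (continuous_const.mul ((continuous_const.sub hc1).pow 2))
        apply squeeze_zero_norm' (a := fun τ : ℝ => 2 * M * |Real.sin (2 * (τ - π))| +
            M * (1 - Real.cos (2 * (τ - π)))^2)
        · have hnh : Set.Ioo ((k:ℝ)*π - π) ((k:ℝ)*π + π) ∈ nhds ((k:ℝ)*π) :=
            isOpen_Ioo.mem_nhds ⟨by linarith, by linarith⟩
          filter_upwards [hnh] with σ hσ
          rcases eq_or_ne σ ((k:ℝ)*π) with rfl | hne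
          · rw [hD20 k]
            simp only [norm_zero]
            positivity
          · have hσgood : ∃ m : ℤ, σ - m * (2 * π) ∈ Sgood := by
              rcases good_or_bad σ with ⟨m, rfl⟩ | h
              · exfalso
                have ha : (m - k : ℤ) < 1 := by
                  have : ((m - k : ℤ) : ℝ) < 1 := by
                    push_cast
                    nlinarith [hσ.2]
                  exact_mod_cast this
                have hb : (-1 : ℤ) < (m - k : ℤ) := by
                  have : (-1 : ℝ) < ((m - k : ℤ) : ℝ) := by
                    push_cast
                    nlinarith [hσ.1]
                  exact_mod_cast this
                have : m = k := by omega
                exact hne (by rw [this])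
              · exact h
            obtain ⟨m, hm⟩ := hσgood
            obtain ⟨-, -, hbd'⟩ := hgood σ m hm
            have h1 : |Ht x (trep σ)| ≤ M := hMv _
            have hcle : 0 ≤ 1 - Real.cos (2 * (σ - π)) := by
              have := Real.cos_le_one (2 * (σ - π)); linarith
            simp only [hD₂, Real.norm_eq_abs]
            have t1 : |2 * Real.sin (2 * (σ - π)) * Ht x (trep σ)| ≤
                2 * M * |Real.sin (2 * (σ - π))| := by
              rw [abs_mul, abs_mul, abs_two]
              nlinarith [abs_nonneg (Real.sin (2 * (σ - π))), abs_nonneg (Ht x (trep σ))]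
            have t2 : |(1 - Real.cos (2 * (σ - π)))^2 * deriv (Ht x) (trep σ)| ≤
                M * (1 - Real.cos (2 * (σ - π)))^2 := by
              rw [abs_mul, abs_of_nonneg (sq_nonneg _)]
              nlinarith [sq_nonneg (1 - Real.cos (2 * (σ - π))), abs_nonneg (deriv (Ht x) (trep σ))]
            calc |2 * Real.sin (2 * (σ - π)) * Ht x (trep σ) +
                (1 - Real.cos (2 * (σ - π)))^2 * deriv (Ht x) (trep σ)|
                ≤ |2 * Real.sin (2 * (σ - π)) * Ht x (trep σ)| +
                  |(1 - Real.cos (2 * (σ - π)))^2 * deriv (Ht x) (trep σ)| := abs_add_le _ _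
              _ ≤ 2 * M * |Real.sin (2 * (σ - π))| +
                  M * (1 - Real.cos (2 * (σ - π)))^2 := add_le_add t1 t2
        · have h7 := hgc.continuousAt (x := (k:ℝ)*π)
          unfold ContinuousAt at h7
          have hg0 : 2 * M * |Real.sin (2 * ((k:ℝ)*π - π))| +
              M * (1 - Real.cos (2 * ((k:ℝ)*π - π)))^2 = 0 := by
            rw [(hbadval k).1, (hbadval k).2]
            simp
          beta_reduce at h7
          rwa [hg0] at h7
      · -- good point: continuity by composition
        obtain ⟨hd, hcont, -⟩ := hgood τ k hk
        have h1 : ContinuousAt (fun σ => Ht x (trep σ)) τ :=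
          ContinuousAt.comp (f := trep) hd.continuousAt continuous_trep.continuousAt
        have h2 : ContinuousAt (fun σ => deriv (Ht x) (trep σ)) τ :=
          ContinuousAt.comp (f := trep) hcont continuous_trep.continuousAt
        have hA : Continuous fun τ : ℝ => 2 * Real.sin (2 * (τ - π)) :=
          continuous_const.mul (Real.continuous_sin.comp (by fun_prop))
        have hC : Continuous fun τ : ℝ => (1 - Real.cos (2 * (τ - π)))^2 :=
          (continuous_const.sub (Real.continuous_cos.comp (by fun_prop))).pow 2
        simp only [hD₂]
        exact (hA.continuousAt.mul h1).add (hC.continuousAt.mul h2)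
    rw [contDiff_one_iff_deriv]
    refine ⟨fun τ => (key1 τ).differentiableAt, ?_⟩
    have hder : deriv (H₂ x) = D₂ := funext fun τ => (key1 τ).deriv
    rw [hder]
    exact key2
  · -- helicity
    have h02 : (0:ℝ) ≤ 2 * π := by positivity
    have hstep : ∀ τ : ℝ, (∫ x in D, H₂ x τ) =
        (1 - Real.cos (2 * (τ - π))) * ∫ x in D, Ht x (trep τ) := by
      intro τ
      simp only [hdef]
      exact MeasureTheory.integral_const_mul _ _
    rw [intervalIntegral.integral_of_le h02, intervalIntegral.integral_of_le h02]
    have himg : trep '' Set.Ioc 0 (2 * π) = Set.Ioc 0 (2 * π) := by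
      apply Set.Subset.antisymm
      · rintro t ⟨s, hs, rfl⟩
        constructor
        · have := trep_strictMono hs.1; rwa [trep_zero] at this
        · have := trep_strictMono.monotone hs.2; rwa [trep_two_pi] at this
      · have h8 := intermediate_value_Ioc h02 continuous_trep.continuousOn
        rwa [trep_zero, trep_two_pi] at h8
    have hchg := integral_image_eq_integral_abs_deriv_smul (s := Set.Ioc 0 (2 * π)) (f := trep)
        (f' := fun τ => 1 - Real.cos (2 * (τ - π))) measurableSet_Ioc
        (fun τ _ => (hasDerivAt_trep τ).hasDerivWithinAt)
        (trep_strictMono.injective.injOn)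
        (fun t => ∫ x in D, Ht x t)
    rw [himg] at hchg
    rw [hchg]
    apply MeasureTheory.integral_congr_ae
    refine Filter.Eventually.of_forall fun τ => ?_
    have hcle : 0 ≤ 1 - Real.cos (2 * (τ - π)) := by
      have := Real.cos_le_one (2 * (τ - π)); linarith
    show (∫ x in D, H₂ x τ) = |1 - Real.cos (2 * (τ - π))| • ∫ x in D, Ht x (trep τ)
    rw [hstep τ, abs_of_nonneg hcle, smul_eq_mul]
  · -- same trajectories
    intro g x hg τ hτ
    have h1 := hg (trep τ) hτ
    have h2 := h1.scomp τ (hasDerivAt_trep τ)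
    have hham : hamVF H₂ (g (trep τ) x) τ =
        (1 - Real.cos (2 * (τ - π))) • hamVF Ht (g (trep τ) x) (trep τ) := by
      have hfun : (fun y => H₂ y τ) = fun y => (1 - Real.cos (2 * (τ - π))) * Ht y (trep τ) :=
        funext fun y => hdef y τ
      unfold hamVF
      rw [hfun, fderiv_const_mul'' (fun y => Ht y (trep τ)) _ _]
      simp [Prod.smul_mk, smul_eq_mul, mul_neg]
    rw [hham]
    exact h2

end
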